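/- The α-contraction of the Möbius function satisfies: μ_α(n) = μ(n) if n ≡ 1 or 3 (mod 4), μ_α(n) = μ(n/2) if n ≡ 0 (mod 4), and μ_α(n) = 0 if n ≡ 2 (mod 4). Moreover, μ_α is multiplicative. -/

import Mathlib

open Finset

lemma exists_pos_dvd_fib (m : ℕ) (hm : 0 < m) : ∃ k, 0 < k ∧ m ∣ Nat.fib k := by
  haveI : NeZero m := ⟨hm.ne'⟩
  set f : ℕ → ZMod m × ZMod m :=
    fun k => ((Nat.fib k : ZMod m), (Nat.fib (k+1) : ZMod m)) with hf
  have step : ∀ a b : ℕ, f (a+1) = f (b+1) → f a = f b := by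
    intro a b h
    have h1 : (Nat.fib (a+1) : ZMod m) = (Nat.fib (b+1) : ZMod m) :=
      congrArg Prod.fst h
    have h2 : (Nat.fib (a+2) : ZMod m) = (Nat.fib (b+2) : ZMod m) :=
      congrArg Prod.snd h
    have ha : (Nat.fib (a+2) : ZMod m) = Nat.fib a + Nat.fib (a+1) := by
      rw [Nat.fib_add_two]; push_cast; ring
    have hb : (Nat.fib (b+2) : ZMod m) = Nat.fib b + Nat.fib (b+1) := by
      rw [Nat.fib_add_two]; push_cast; ring
    have : (Nat.fib a : ZMod m) = Nat.fib b := by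
      have := h2; rw [ha, hb, h1] at this
      exact add_right_cancel this
    simp only [hf, Prod.mk.injEq]
    exact ⟨this, h1⟩
  have back : ∀ a t : ℕ, f a = f (a + t) → f 0 = f t := by
    intro a
    induction a with
    | zero => intro t h; simpa using h
    | succ a ih =>
      intro t h
      apply ih
      apply step
      rw [h]; ring_nf
  obtain ⟨i, j, hne, heq⟩ := Finite.exists_ne_map_eq_of_infinite f
  rcases hne.lt_or_gt with hij | hij
  · refine ⟨j - i, by omega, ?_⟩
    have := back i (j - i) (by rw [heq]; congr 1; omega)
    have h0 : (Nat.fib (j - i) : ZMod m) = 0 := by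
      have := congrArg Prod.fst this
      simpa [hf] using this.symm
    exact (ZMod.natCast_eq_zero_iff _ _).mp h0
  · refine ⟨i - j, by omega, ?_⟩
    have := back j (i - j) (by rw [← heq]; congr 1; omega)
    have h0 : (Nat.fib (i - j) : ZMod m) = 0 := by
      have := congrArg Prod.fst this
      simpa [hf] using this.symm
    exact (ZMod.natCast_eq_zero_iff _ _).mp h0

noncomputable def fibAlpha (n : ℕ) : ℕ := sInf {m | 0 < m ∧ n ∣ Nat.fib m}

lemma fibAlpha_spec (m : ℕ) (hm : 0 < m) :
    0 < fibAlpha m ∧ m ∣ Nat.fib (fibAlpha m) := by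
  have hne : {k | 0 < k ∧ m ∣ Nat.fib k}.Nonempty := by
    obtain ⟨k, hk, hdvd⟩ := exists_pos_dvd_fib m hm
    exact ⟨k, hk, hdvd⟩
  exact Nat.sInf_mem hne

lemma fibAlpha_le (m k : ℕ) (hk : 0 < k) (h : m ∣ Nat.fib k) : fibAlpha m ≤ k :=
  Nat.sInf_le ⟨hk, h⟩

lemma dvd_fib_iff (m : ℕ) (hm : 0 < m) (k : ℕ) :
    m ∣ Nat.fib k ↔ fibAlpha m ∣ k := by
  obtain ⟨hpos, hdvd⟩ := fibAlpha_spec m hm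
  constructor
  · intro h
    rcases Nat.eq_zero_or_pos k with rfl | hk
    · exact Dvd.intro 0 rfl
    · have hg : m ∣ Nat.fib (Nat.gcd (fibAlpha m) k) := by
        rw [Nat.fib_gcd]
        exact Nat.dvd_gcd hdvd h
      have h1 : fibAlpha m ≤ Nat.gcd (fibAlpha m) k :=
        fibAlpha_le m _ (Nat.gcd_pos_of_pos_right _ hk) hg
      have h2 : Nat.gcd (fibAlpha m) k ≤ fibAlpha m :=
        Nat.le_of_dvd hpos (Nat.gcd_dvd_left _ _)
      have : Nat.gcd (fibAlpha m) k = fibAlpha m := le_antisymm h2 h1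
      rw [← this]
      exact Nat.gcd_dvd_right _ _
  · intro h
    exact hdvd.trans (Nat.fib_dvd _ _ h)

lemma fib_eq_one_iff (n : ℕ) : Nat.fib n = 1 ↔ n = 1 ∨ n = 2 := by
  constructor
  · intro h
    rcases n with _ | _ | _ | n
    · simp at h
    · left; rfl
    · right; rfl
    · exfalso
      have h3 : Nat.fib 3 ≤ Nat.fib (n + 3) := Nat.fib_mono (by omega)
      have h2 : Nat.fib 3 = 2 := rfl
      have h' : Nat.fib (n+3) = 1 := h
      omega
  · rintro (rfl | rfl) <;> rfl

/-- The α-contraction of an arithmetic function: `f_α(n) = ∑_{m : α m = n} f m`;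
all such `m` lie in `Icc 1 (fib n)`. -/
noncomputable def alphaCon (f : ℕ → ℤ) (n : ℕ) : ℤ :=
  ∑ m ∈ (Icc 1 (Nat.fib n)).filter (fun m => fibAlpha m = n), f m

open ArithmeticFunction in
lemma sum_moebius_divisors (N : ℕ) :
    ∑ m ∈ N.divisors, (moebius m : ℤ) = if N = 1 then 1 else 0 := by
  have h : ((moebius * zeta : ArithmeticFunction ℤ)) N = (1 : ArithmeticFunction ℤ) N := by
    rw [moebius_mul_coe_zeta]
  rwa [coe_mul_zeta_apply, one_apply] at h

open ArithmeticFunction in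
lemma sum_alphaCon_divisors (n : ℕ) (hn : 0 < n) :
    ∑ d ∈ n.divisors, alphaCon (fun m => moebius m) d
      = if n = 1 ∨ n = 2 then 1 else 0 := by
  have hfib : 0 < Nat.fib n := Nat.fib_pos.mpr hn
  have key : ∑ d ∈ n.divisors,
      ∑ m ∈ (Nat.fib n).divisors.filter (fun m => fibAlpha m = d), (moebius m : ℤ)
      = ∑ m ∈ (Nat.fib n).divisors, (moebius m : ℤ) := by
    apply Finset.sum_fiberwise_of_maps_to
    intro m hm
    rw [Nat.mem_divisors] at hm
    have hmpos : 0 < m := Nat.pos_of_ne_zero (by rintro rfl; exact hm.2 (Nat.eq_zero_of_zero_dvd hm.1))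
    rw [Nat.mem_divisors]
    exact ⟨(dvd_fib_iff m hmpos n).mp hm.1, hn.ne'⟩
  have fiber : ∀ d ∈ n.divisors,
      (Nat.fib n).divisors.filter (fun m => fibAlpha m = d)
        = (Icc 1 (Nat.fib d)).filter (fun m => fibAlpha m = d) := by
    intro d hd
    rw [Nat.mem_divisors] at hd
    have hdpos : 0 < d := Nat.pos_of_dvd_of_pos hd.1 hn
    have hfd : 0 < Nat.fib d := Nat.fib_pos.mpr hdpos
    ext m
    simp only [Finset.mem_filter, Nat.mem_divisors, Finset.mem_Icc]
    constructor
    · rintro ⟨⟨hdvd, _⟩, ha⟩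
      have hmpos : 0 < m := Nat.pos_of_ne_zero
        (by rintro rfl; exact hfib.ne' (Nat.eq_zero_of_zero_dvd hdvd))
      have hmd : m ∣ Nat.fib d := ha ▸ (fibAlpha_spec m hmpos).2
      exact ⟨⟨hmpos, Nat.le_of_dvd hfd hmd⟩, ha⟩
    · rintro ⟨⟨h1, _⟩, ha⟩
      have hmd : m ∣ Nat.fib d := ha ▸ (fibAlpha_spec m h1).2
      exact ⟨⟨hmd.trans (Nat.fib_dvd _ _ hd.1), hfib.ne'⟩, ha⟩
  calc ∑ d ∈ n.divisors, alphaCon (fun m => moebius m) d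
      = ∑ d ∈ n.divisors,
          ∑ m ∈ (Nat.fib n).divisors.filter (fun m => fibAlpha m = d), (moebius m : ℤ) := by
        refine Finset.sum_congr rfl fun d hd => ?_
        rw [fiber d hd]; rfl
    _ = ∑ m ∈ (Nat.fib n).divisors, (moebius m : ℤ) := key
    _ = if Nat.fib n = 1 then 1 else 0 := sum_moebius_divisors _
    _ = if n = 1 ∨ n = 2 then 1 else 0 := by simp only [fib_eq_one_iff]

open ArithmeticFunction in
lemma alphaCon_moebius_eq (n : ℕ) (hn : 0 < n) :
    alphaCon (fun m => moebius m) n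
      = moebius n + if 2 ∣ n then (moebius (n / 2) : ℤ) else 0 := by
  have hinv := (sum_eq_iff_sum_smul_moebius_eq
      (f := alphaCon (fun m => (moebius m : ℤ)))
      (g := fun k => if k = 1 ∨ k = 2 then (1:ℤ) else 0)).mp
      (fun k hk => sum_alphaCon_divisors k hk) n hn
  rw [← hinv]
  have hterm : ∀ x ∈ n.divisorsAntidiagonal,
      (moebius x.1 : ℤ) • (if x.2 = 1 ∨ x.2 = 2 then (1:ℤ) else 0)
        = (if x.2 = 1 then (moebius x.1 : ℤ) else 0)
          + (if x.2 = 2 then (moebius x.1 : ℤ) else 0) := by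
    intro x _
    by_cases h1 : x.2 = 1
    · simp [h1]
    · by_cases h2 : x.2 = 2 <;> simp [h1, h2]
  rw [Finset.sum_congr rfl hterm, Finset.sum_add_distrib]
  have hs1 : ∑ x ∈ n.divisorsAntidiagonal,
      (if x.2 = 1 then (moebius x.1 : ℤ) else 0) = moebius n := by
    rw [Finset.sum_eq_single ((n, 1) : ℕ × ℕ)]
    · simp
    · intro x hx hne
      rw [Nat.mem_divisorsAntidiagonal] at hx
      by_cases h : x.2 = 1
      · exfalso
        apply hne
        have : x.1 = n := by rw [← hx.1, h, mul_one]
        exact Prod.ext this h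
      · simp [h]
    · intro h
      exact absurd (Nat.mem_divisorsAntidiagonal.mpr ⟨mul_one n, hn.ne'⟩) h
  have hs2 : ∑ x ∈ n.divisorsAntidiagonal,
      (if x.2 = 2 then (moebius x.1 : ℤ) else 0)
        = if 2 ∣ n then (moebius (n / 2) : ℤ) else 0 := by
    by_cases hd : 2 ∣ n
    · rw [if_pos hd, Finset.sum_eq_single ((n / 2, 2) : ℕ × ℕ)]
      · simp
      · intro x hx hne
        rw [Nat.mem_divisorsAntidiagonal] at hx
        by_cases h : x.2 = 2
        · exfalso
          apply hne
          have : x.1 = n / 2 := by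
            have := hx.1
            rw [h] at this
            omega
          exact Prod.ext this h
        · simp [h]
      · intro h
        refine absurd (Nat.mem_divisorsAntidiagonal.mpr ⟨?_, hn.ne'⟩) h
        exact Nat.div_mul_cancel hd
    · rw [if_neg hd, Finset.sum_eq_zero]
      intro x hx
      rw [Nat.mem_divisorsAntidiagonal] at hx
      by_cases h : x.2 = 2
      · exfalso
        exact hd ⟨x.1, by rw [← hx.1, h, mul_comm]⟩
      · simp [h]
  rw [hs1, hs2]

open ArithmeticFunction in
lemma alphaCon_moebius_zero : alphaCon (fun m => (moebius m : ℤ)) 0 = 0 := by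
  simp [alphaCon]

open ArithmeticFunction in
lemma moebius_four_dvd {n : ℕ} (h : 4 ∣ n) : (moebius n : ℤ) = 0 := by
  apply moebius_eq_zero_of_not_squarefree
  intro hsq
  have h22 : 2 * 2 ∣ n := by omega
  have := hsq 2 h22
  rw [Nat.isUnit_iff] at this
  omega

theorem moebius_alphaCon :
    (∀ n : ℕ, 0 < n →
        ((n % 4 = 1 ∨ n % 4 = 3) →
            alphaCon (fun m => ArithmeticFunction.moebius m) n = ArithmeticFunction.moebius n) ∧
        (n % 4 = 0 →
            alphaCon (fun m => ArithmeticFunction.moebius m) n =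
              ArithmeticFunction.moebius (n / 2)) ∧
        (n % 4 = 2 → alphaCon (fun m => ArithmeticFunction.moebius m) n = 0)) ∧
    alphaCon (fun m => ArithmeticFunction.moebius m) 1 = 1 ∧
    ∀ m n : ℕ, Nat.Coprime m n →
      alphaCon (fun k => ArithmeticFunction.moebius k) (m * n) =
        alphaCon (fun k => ArithmeticFunction.moebius k) m *
          alphaCon (fun k => ArithmeticFunction.moebius k) n := by
  have hmul := ArithmeticFunction.isMultiplicative_moebius
  refine ⟨?_, ?_, ?_⟩
  · intro n hn
    have hf := alphaCon_moebius_eq n hn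
    refine ⟨?_, ?_, ?_⟩
    · intro hmod
      have h2 : ¬ 2 ∣ n := by omega
      rw [hf, if_neg h2, add_zero]
    · intro hmod
      have h2 : 2 ∣ n := by omega
      have h4 : 4 ∣ n := by omega
      rw [hf, if_pos h2, moebius_four_dvd h4, zero_add]
    · intro hmod
      have h2 : 2 ∣ n := by omega
      have hodd : ¬ 2 ∣ (n / 2) := by omega
      have hco : Nat.Coprime 2 (n / 2) :=
        (Nat.Prime.coprime_iff_not_dvd Nat.prime_two).mpr hodd
      have hn2 : n = 2 * (n / 2) := by omega
      have hμ : (ArithmeticFunction.moebius n : ℤ)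
          = - ArithmeticFunction.moebius (n / 2) := by
        conv_lhs => rw [hn2]
        rw [hmul.map_mul_of_coprime hco,
          ArithmeticFunction.moebius_apply_prime Nat.prime_two]
        ring
      rw [hf, if_pos h2, hμ]
      ring
  · rw [alphaCon_moebius_eq 1 one_pos]
    norm_num
  · intro m n hco
    rcases Nat.eq_zero_or_pos m with rfl | hm
    · rw [Nat.coprime_zero_left] at hco
      subst hco
      simp [alphaCon_moebius_zero]
    rcases Nat.eq_zero_or_pos n with rfl | hn
    · rw [Nat.coprime_zero_right] at hco
      subst hco
      simp [alphaCon_moebius_zero]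
    have hmn : 0 < m * n := Nat.mul_pos hm hn
    rw [alphaCon_moebius_eq _ hmn, alphaCon_moebius_eq _ hm, alphaCon_moebius_eq _ hn]
    have hg : Nat.gcd m n = 1 := hco
    by_cases h2m : 2 ∣ m
    · have h2n : ¬ 2 ∣ n := by
        intro h
        have h2 : 2 ∣ Nat.gcd m n := Nat.dvd_gcd h2m h
        rw [hg] at h2
        omega
      obtain ⟨k, rfl⟩ := h2m
      have h2mn : 2 ∣ 2 * k * n := ⟨k * n, by ring⟩
      rw [if_pos h2mn, if_pos (dvd_mul_right 2 k), if_neg h2n]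
      have e1 : 2 * k * n / 2 = k * n := by
        rw [mul_assoc]; exact Nat.mul_div_cancel_left _ (by norm_num)
      have e2 : 2 * k / 2 = k := Nat.mul_div_cancel_left _ (by norm_num)
      rw [e1, e2]
      have hck : Nat.Coprime k n := Nat.Coprime.coprime_dvd_left ⟨2, mul_comm 2 k⟩ hco
      rw [hmul.map_mul_of_coprime hco, hmul.map_mul_of_coprime hck]
      ring
    · by_cases h2n : 2 ∣ n
      · obtain ⟨k, rfl⟩ := h2n
        have h2mn : 2 ∣ m * (2 * k) := ⟨m * k, by ring⟩
        rw [if_pos h2mn, if_pos (dvd_mul_right 2 k), if_neg h2m]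
        have e1 : m * (2 * k) / 2 = m * k := by
          rw [show m * (2 * k) = 2 * (m * k) by ring]
          exact Nat.mul_div_cancel_left _ (by norm_num)
        have e2 : 2 * k / 2 = k := Nat.mul_div_cancel_left _ (by norm_num)
        rw [e1, e2]
        have hck : Nat.Coprime m k := Nat.Coprime.coprime_dvd_right ⟨2, mul_comm 2 k⟩ hco
        rw [hmul.map_mul_of_coprime hco, hmul.map_mul_of_coprime hck]
        ring
      · have h2mn : ¬ 2 ∣ m * n := by
          intro h
          rcases (Nat.Prime.dvd_mul Nat.prime_two).mp h with h | h
          · exact h2m h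
          · exact h2n h
        rw [if_neg h2mn, if_neg h2m, if_neg h2n]
        rw [hmul.map_mul_of_coprime hco]
        ring
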